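/- In the game F-Wythoff, the set of positions with Sprague-Grundy value 1 is exactly {(0,1)} ∪ {(⌊φn⌋+2, ⌊φ²n⌋+2) : n ≥ 0} (pairs unordered), where φ = (1+√5)/2. -/

import Mathlib

noncomputable def phi : ℝ := (1 + Real.sqrt 5) / 2

noncomputable def fl (n : ℕ) : ℕ := ⌊phi * n⌋₊

noncomputable def fl2 (n : ℕ) : ℕ := ⌊phi ^ 2 * n⌋₊

def FMove (p q : ℕ × ℕ) : Prop :=
  ∃ a b x y : ℕ, a ≤ b ∧ x ≤ y ∧ (p = (a, b) ∨ p = (b, a)) ∧ (q = (x, y) ∨ q = (y, x)) ∧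
    ((x = a ∧ y < b) ∨ (x < a ∧ y = b) ∨ (x < a ∧ y = a) ∨
      (∃ k, 1 ≤ k ∧ k < a ∧ (b - k) / (a - k) = b / a ∧ x = a - k ∧ y = b - k))

theorem fMove_lt {p q : ℕ × ℕ} (h : FMove p q) : q.1 + q.2 < p.1 + p.2 := by
  obtain ⟨a, b, x, y, hab, hxy, hp, hq, hc⟩ := h
  have hps : p.1 + p.2 = a + b := by rcases hp with h | h <;> subst h <;> simp <;> omega
  have hqs : q.1 + q.2 = x + y := by rcases hq with h | h <;> subst h <;> simp <;> omega
  rw [hps, hqs]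
  rcases hc with ⟨h1, h2⟩ | ⟨h1, h2⟩ | ⟨h1, h2⟩ | ⟨k, hk1, hk2, _, h1, h2⟩ <;> omega

def PPos (p : ℕ × ℕ) : Prop := ∀ q, FMove p q → ¬ PPos q
termination_by p.1 + p.2
decreasing_by exact fMove_lt (by assumption)

noncomputable def grundy (p : ℕ × ℕ) : ℕ :=
  sInf {g : ℕ | ∀ q, FMove p q → grundy q ≠ g}
termination_by p.1 + p.2
decreasing_by exact fMove_lt (by assumption)


lemma phi_eq : phi = Real.goldenRatio := rfl
lemma one_lt_phi : 1 < phi := Real.one_lt_goldenRatio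
lemma phi_pos : 0 < phi := Real.goldenRatio_pos
lemma phi_sq : phi ^ 2 = phi + 1 := Real.goldenRatio_sq
lemma irr_phi : Irrational phi := Real.goldenRatio_irrational

lemma phin_nonneg (n : ℕ) : 0 ≤ phi * n := mul_nonneg phi_pos.le (Nat.cast_nonneg n)

lemma irr_phi_mul (n : ℕ) (hn : n ≠ 0) : Irrational (phi * n) :=
  irr_phi.mul_natCast hn

lemma fl_le_phi (n : ℕ) : (fl n : ℝ) ≤ phi * n := Nat.floor_le (phin_nonneg n)

lemma fl_lt_phi (n : ℕ) (hn : 1 ≤ n) : (fl n : ℝ) < phi * n := by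
  rcases lt_or_eq_of_le (fl_le_phi n) with h | h
  · exact h
  · exact absurd h.symm ((irr_phi_mul n (by omega)).ne_nat (fl n))
lemma phi_lt_fl (n : ℕ) : phi * n < fl n + 1 := Nat.lt_floor_add_one _

lemma fl2_eq (n : ℕ) : fl2 n = fl n + n := by
  unfold fl2 fl
  rw [show phi ^ 2 * n = phi * n + n by rw [phi_sq]; ring]
  rw [Nat.floor_add_natCast (phin_nonneg n)]

lemma fl_strictMono : StrictMono fl := by
  apply strictMono_nat_of_lt_succ
  intro n
  have h1 : ((fl n + 1 : ℕ) : ℝ) ≤ phi * ((n+1 : ℕ) : ℝ) := by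
    have h2 := fl_le_phi n
    have h3 := one_lt_phi
    push_cast
    nlinarith
  have h2 : fl n + 1 ≤ fl (n+1) := by unfold fl; exact Nat.le_floor h1
  omega
lemma le_fl (n : ℕ) : n ≤ fl n :=
  Nat.le_floor (by nlinarith [one_lt_phi, Nat.cast_nonneg (α := ℝ) n])
lemma fl_zero : fl 0 = 0 := by unfold fl; simp
lemma fl_one : fl 1 = 1 := by
  have h1 := fl_lt_phi 1 le_rfl
  have h2 := phi_lt_fl 1
  have h3 := one_lt_phi
  have h4 : phi < 2 := by rw [phi_eq]; exact Real.goldenRatio_lt_two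
  have : (fl 1 : ℝ) < 2 := by push_cast at h1 h2 ⊢; linarith
  have : fl 1 < 2 := by exact_mod_cast this
  have := le_fl 1
  omega

lemma beatty_disj (m n : ℕ) (hm : 1 ≤ m) (hn : 1 ≤ n) : fl n ≠ fl2 m := by
  intro h
  set c := fl n with hc
  have hc1 : 1 ≤ c := le_trans hn (le_fl n)
  have h1 : (c : ℝ) < phi * n := fl_lt_phi n hn
  have h2 : phi * n < c + 1 := phi_lt_fl n
  -- c = fl2 m : c < phi^2 * m < c + 1
  have h3 : (c : ℝ) < phi ^ 2 * m := by
    have := fl_lt_phi m hm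
    have := le_fl m
    rw [h, fl2_eq] at hc
    have hcast : ((fl m : ℕ) : ℝ) + m = c := by exact_mod_cast hc
    nlinarith [phi_sq]
  have h4 : phi ^ 2 * m < c + 1 := by
    have := phi_lt_fl m
    rw [h, fl2_eq] at hc
    have hcast : ((fl m : ℕ) : ℝ) + m = c := by exact_mod_cast hc
    nlinarith [phi_sq]
  -- divide: c(phi-1) < n,  n < (c+1)(phi-1), similar for m with (2-phi)
  have hphi := phi_sq
  have hpos := phi_pos
  have e1 : (c : ℝ) * (phi - 1) < n := by nlinarith
  have e2 : (n : ℝ) < (c+1) * (phi - 1) := by nlinarith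
  have e3 : (c : ℝ) * (2 - phi) < m := by nlinarith
  have e4 : (m : ℝ) < (c+1) * (2 - phi) := by nlinarith
  have f1 : (c : ℝ) < n + m := by nlinarith
  have f2 : ((n : ℝ) + m) < c + 1 := by nlinarith
  have g1 : c < n + m := by exact_mod_cast f1
  have g2 : n + m < c + 1 := by exact_mod_cast f2
  omega

lemma beatty_ex (c : ℕ) (hc : 1 ≤ c) :
    (∃ n, 1 ≤ n ∧ fl n = c) ∨ (∃ n, 1 ≤ n ∧ fl2 n = c) := by
  have hpos := phi_pos
  have hphi := phi_sq
  have h1 := one_lt_phi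
  set n := ⌊((c:ℝ)+1)/phi⌋₊ with hn
  have hb1 : (n : ℝ) * phi ≤ c + 1 := by
    have := Nat.floor_le (show (0:ℝ) ≤ ((c:ℝ)+1)/phi by positivity)
    rw [← hn] at this
    calc (n:ℝ) * phi ≤ (((c:ℝ)+1)/phi) * phi := by nlinarith
      _ = c + 1 := by field_simp
  have hb2 : (c : ℝ) + 1 < (n + 1) * phi := by
    have := Nat.lt_floor_add_one (((c:ℝ)+1)/phi)
    rw [← hn] at this
    calc (c:ℝ) + 1 = (((c:ℝ)+1)/phi) * phi := by field_simp
      _ < (n+1) * phi := by nlinarith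
  have hn1 : 1 ≤ n := by
    by_contra hn0
    have : n = 0 := by omega
    rw [this] at hb2
    norm_num at hb2
    have : (c : ℝ) ≥ 1 := by exact_mod_cast hc
    have h4 : phi < 2 := by rw [phi_eq]; exact Real.goldenRatio_lt_two
    linarith
  have hb1' : (n : ℝ) * phi < c + 1 := by
    rcases lt_or_eq_of_le hb1 with h | h
    · exact h
    · exfalso
      apply (irr_phi_mul n (by omega)).ne_nat (c+1)
      push_cast
      rw [mul_comm phi]
      exact h
  rcases lt_trichotomy ((c:ℝ)) (n * phi) with h | h | h
  · left
    refine ⟨n, hn1, ?_⟩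
    unfold fl
    rw [Nat.floor_eq_iff (by positivity)]
    constructor
    · nlinarith
    · push_cast; nlinarith
  · exfalso
    exact (irr_phi_mul n (by omega)).ne_nat c (by rw [mul_comm] at h; exact h.symm)
  · right
    have hnc : n < c := by
      have : (n : ℝ) < c := by nlinarith
      exact_mod_cast this
    refine ⟨c - n, by omega, ?_⟩
    unfold fl2
    have hcast : ((c - n : ℕ) : ℝ) = (c : ℝ) - n := by
      push_cast [Nat.cast_sub hnc.le]; ring
    rw [Nat.floor_eq_iff (by positivity)]
    rw [hcast]
    constructor
    · nlinarith
    · push_cast; nlinarith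

lemma grundy_eq (p : ℕ × ℕ) : grundy p = sInf {g : ℕ | ∀ q, FMove p q → grundy q ≠ g} := by
  rw [grundy]

lemma grundy_le : ∀ N (p : ℕ × ℕ), p.1 + p.2 ≤ N → grundy p ≤ p.1 + p.2 := by
  intro N
  induction N with
  | zero =>
    intro p hp
    rw [grundy_eq]
    apply Nat.sInf_le
    intro q hq
    exact absurd (fMove_lt hq) (by omega)
  | succ N IH =>
    intro p hp
    rw [grundy_eq]
    apply Nat.sInf_le
    intro q hq
    have h1 := fMove_lt hq
    have h2 := IH q (by omega)
    omega

lemma sumMem (p : ℕ × ℕ) : p.1 + p.2 ∈ {g : ℕ | ∀ q, FMove p q → grundy q ≠ g} := by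
  intro q hq
  have h1 := fMove_lt hq
  have h2 := grundy_le (q.1 + q.2) q le_rfl
  omega

lemma grundy0_iff (p : ℕ × ℕ) : grundy p = 0 ↔ ∀ q, FMove p q → grundy q ≠ 0 := by
  constructor
  · intro h
    rw [grundy_eq] at h
    rcases Nat.sInf_eq_zero.mp h with h | h
    · exact h
    · exact absurd h (Set.nonempty_iff_ne_empty.mp ⟨_, sumMem p⟩)
  · intro h
    rw [grundy_eq]
    exact Nat.eq_zero_of_le_zero (Nat.sInf_le h)

lemma grundy1_iff (p : ℕ × ℕ) :
    grundy p = 1 ↔ (∃ q, FMove p q ∧ grundy q = 0) ∧ ∀ q, FMove p q → grundy q ≠ 1 := by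
  rw [grundy_eq]
  constructor
  · intro h
    have hne : {g : ℕ | ∀ q, FMove p q → grundy q ≠ g}.Nonempty := ⟨_, sumMem p⟩
    have h1 : 1 ∈ {g : ℕ | ∀ q, FMove p q → grundy q ≠ g} := h ▸ Nat.sInf_mem hne
    have h0 : 0 ∉ {g : ℕ | ∀ q, FMove p q → grundy q ≠ g} :=
      Nat.notMem_of_lt_sInf (by omega)
    refine ⟨?_, h1⟩
    simp only [Set.mem_setOf_eq, not_forall] at h0
    obtain ⟨q, hq, hg⟩ := h0
    exact ⟨q, hq, by tauto⟩
  · rintro ⟨⟨q, hq, hg⟩, h1⟩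
    have hle : sInf {g : ℕ | ∀ q, FMove p q → grundy q ≠ g} ≤ 1 := Nat.sInf_le h1
    have hne : sInf {g : ℕ | ∀ q, FMove p q → grundy q ≠ g} ≠ 0 := by
      intro h0
      have := Nat.sInf_mem (⟨_, sumMem p⟩ : {g : ℕ | ∀ q, FMove p q → grundy q ≠ g}.Nonempty)
      rw [h0] at this
      exact this q hq hg
    omega

def OMove (a b x y : ℕ) : Prop :=
  (x = a ∧ y < b) ∨ (x < a ∧ y = b) ∨ (x < a ∧ y = a) ∨
    (∃ k, 1 ≤ k ∧ k < a ∧ (b - k) / (a - k) = b / a ∧ x = a - k ∧ y = b - k)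

def PP (a b : ℕ) : Prop := (a = 0 ∧ b = 0) ∨ ∃ n, a = fl n + 1 ∧ b = fl n + n + 1
def QQ (a b : ℕ) : Prop := (a = 0 ∧ b = 1) ∨ ∃ n, a = fl n + 2 ∧ b = fl n + n + 2

lemma fl_inj {m n : ℕ} (h : fl m = fl n) : m = n := fl_strictMono.injective h
lemma fl_mono {m n : ℕ} (h : m < n) : fl m < fl n := fl_strictMono h
lemma fl_add_inj {m n : ℕ} (h : fl m + m = fl n + n) : m = n := by
  rcases lt_trichotomy m n with h' | h' | h'
  · have := fl_mono h'; omega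
  · exact h'
  · have := fl_mono h'; omega
lemma beatty_disj' {m n : ℕ} (hm : 1 ≤ m) (hn : 1 ≤ n) : fl n ≠ fl m + m := by
  have := beatty_disj m n hm hn; rw [fl2_eq] at this; exact this

lemma divOne {a b : ℕ} (h1 : 1 ≤ a) (h2 : a ≤ b) (h3 : b < 2 * a) : b / a = 1 :=
  Nat.div_eq_of_lt_le (by omega) (by omega)

lemma PP_le {a b : ℕ} (h : PP a b) : a ≤ b := by
  rcases h with ⟨h1, h2⟩ | ⟨n, h1, h2⟩ <;> omega
lemma QQ_le {a b : ℕ} (h : QQ a b) : a ≤ b := by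
  rcases h with ⟨h1, h2⟩ | ⟨n, h1, h2⟩ <;> omega

lemma PP_not_QQ {a b : ℕ} (hP : PP a b) : ¬ QQ a b := by
  rcases hP with ⟨h1, h2⟩ | ⟨n, h1, h2⟩ <;>
    rintro (⟨g1, g2⟩ | ⟨m, g1, g2⟩)
  · omega
  · omega
  · omega
  · have : n = m := by omega
    subst this; omega

lemma H1 {a b x y : ℕ} (hxy : x ≤ y) (hP : PP a b) (hm : OMove a b x y) : ¬ PP x y := by
  rcases hP with ⟨h1, h2⟩ | ⟨n, h1, h2⟩
  · subst h1; subst h2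
    rcases hm with ⟨g1, g2⟩ | ⟨g1, g2⟩ | ⟨g1, g2⟩ | ⟨k, g1, g2, g3, g4, g5⟩ <;> omega
  · rintro (⟨f1, f2⟩ | ⟨m, f1, f2⟩) <;>
      rcases hm with ⟨g1, g2⟩ | ⟨g1, g2⟩ | ⟨g1, g2⟩ | ⟨k, g1, g2, g3, g4, g5⟩
    · omega
    · omega
    · omega
    · omega
    · -- x = a, y < b, x = fl m + 1
      have : m = n := fl_inj (by omega)
      subst this; omega
    · have : m = n := fl_add_inj (by omega)
      subst this; omega
    · -- x < a, y = a : fl m + m + 1 = fl n + 1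
      rcases Nat.eq_zero_or_pos m with hm0 | hm0
      · subst hm0
        rw [fl_zero] at f1 f2
        rcases Nat.eq_zero_or_pos n with hn0 | hn0
        · subst hn0; rw [fl_zero] at h1 h2; omega
        · have := le_fl n; have := fl_mono hn0; rw [fl_zero] at this; omega
      · rcases Nat.eq_zero_or_pos n with hn0 | hn0
        · subst hn0; rw [fl_zero] at h1 h2
          have := fl_mono hm0; rw [fl_zero] at this; omega
        · exact beatty_disj' hm0 hn0 (by omega)
    · have : m = n := by omega
      subst this; omega

lemma H4 {a b x y : ℕ} (hxy : x ≤ y) (hQ : QQ a b) (hm : OMove a b x y) : ¬ QQ x y := by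
  rcases hQ with ⟨h1, h2⟩ | ⟨n, h1, h2⟩
  · subst h1; subst h2
    rintro (⟨f1, f2⟩ | ⟨m, f1, f2⟩) <;>
      rcases hm with ⟨g1, g2⟩ | ⟨g1, g2⟩ | ⟨g1, g2⟩ | ⟨k, g1, g2, g3, g4, g5⟩ <;> omega
  · rintro (⟨f1, f2⟩ | ⟨m, f1, f2⟩) <;>
      rcases hm with ⟨g1, g2⟩ | ⟨g1, g2⟩ | ⟨g1, g2⟩ | ⟨k, g1, g2, g3, g4, g5⟩
    · omega
    · omega
    · omega
    · omega
    · have : m = n := fl_inj (by omega)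
      subst this; omega
    · have : m = n := fl_add_inj (by omega)
      subst this; omega
    · -- x < a, y = a : fl m + m + 2 = fl n + 2
      rcases Nat.eq_zero_or_pos m with hm0 | hm0
      · subst hm0
        rw [fl_zero] at f1 f2
        rcases Nat.eq_zero_or_pos n with hn0 | hn0
        · subst hn0; rw [fl_zero] at h1 h2; omega
        · have := le_fl n; have := fl_mono hn0; rw [fl_zero] at this; omega
      · rcases Nat.eq_zero_or_pos n with hn0 | hn0
        · subst hn0; rw [fl_zero] at h1 h2
          have := fl_mono hm0; rw [fl_zero] at this; omega
        · exact beatty_disj' hm0 hn0 (by omega)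
    · have : m = n := by omega
      subst this; omega

lemma H2 {a b : ℕ} (hab : a ≤ b) (hP : ¬ PP a b) : ∃ x y, x ≤ y ∧ OMove a b x y ∧ PP x y := by
  rcases Nat.eq_zero_or_pos a with ha0 | ha0
  · subst ha0
    have hb : 1 ≤ b := by
      rcases Nat.eq_zero_or_pos b with h | h
      · exact absurd (Or.inl ⟨rfl, h⟩) hP
      · exact h
    exact ⟨0, 0, le_rfl, Or.inl ⟨rfl, hb⟩, Or.inl ⟨rfl, rfl⟩⟩
  · -- get n with a = fl n + 1 (branch A), or a = fl n + n + 1, n ≥ 1 (branch B)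
    have key : (∃ n, a = fl n + 1) ∨ (∃ n, 1 ≤ n ∧ a = fl n + n + 1) := by
      rcases Nat.eq_zero_or_pos (a - 1) with h | h
      · left; exact ⟨0, by rw [fl_zero]; omega⟩
      · rcases beatty_ex (a-1) h with ⟨n, hn, he⟩ | ⟨n, hn, he⟩
        · left; exact ⟨n, by omega⟩
        · right; rw [fl2_eq] at he; exact ⟨n, hn, by omega⟩
    rcases key with ⟨n, hA⟩ | ⟨n, hn1, hB⟩
    · rcases lt_trichotomy b (fl n + n + 1) with hb | hb | hb
      · -- diagonal move
        have hn1 : 1 ≤ n := by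
          rcases Nat.eq_zero_or_pos n with h | h
          · subst h; rw [fl_zero] at hA hb; omega
          · exact h
        set d := b - a with hd
        have hdn : d < n := by omega
        have hfd : fl d < fl n := fl_mono hdn
        have hdfd := le_fl d
        have hnfn := le_fl n
        refine ⟨fl d + 1, fl d + d + 1, by omega, ?_, Or.inr ⟨d, rfl, rfl⟩⟩
        right; right; right
        refine ⟨fl n - fl d, by omega, by omega, ?_, by omega, by omega⟩
        have e1 : a - (fl n - fl d) = fl d + 1 := by omega
        have e2 : b - (fl n - fl d) = fl d + d + 1 := by omega
        rw [e1, e2, divOne (by omega) (by omega) (by omega),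
          divOne (by omega) (by omega) (by omega)]
      · exact absurd (Or.inr ⟨n, hA, hb⟩) hP
      · refine ⟨a, fl n + n + 1, by omega, Or.inl ⟨rfl, hb⟩, Or.inr ⟨n, hA, rfl⟩⟩
    · -- branch B : move type 3
      refine ⟨fl n + 1, a, by omega, ?_, Or.inr ⟨n, rfl, hB⟩⟩
      right; right; left
      exact ⟨by omega, rfl⟩

lemma H5 {a b : ℕ} (hab : a ≤ b) (hP : ¬ PP a b) (hQ : ¬ QQ a b) :
    ∃ x y, x ≤ y ∧ OMove a b x y ∧ QQ x y := by
  rcases Nat.eq_zero_or_pos a with ha0 | ha0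
  · subst ha0
    have hb : 2 ≤ b := by
      rcases Nat.lt_or_ge b 2 with h | h
      · interval_cases b
        · exact absurd (Or.inl ⟨rfl, rfl⟩) hP
        · exact absurd (Or.inl ⟨rfl, rfl⟩) hQ
      · exact h
    exact ⟨0, 1, by omega, Or.inl ⟨rfl, by omega⟩, Or.inl ⟨rfl, rfl⟩⟩
  · rcases eq_or_lt_of_le (Nat.succ_le_of_lt ha0) with ha1 | ha1
    · -- a = 1
      subst ha1
      have hb : 2 ≤ b := by
        rcases Nat.lt_or_ge b 2 with h | h
        · have hb1 : b = 1 := by omega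
          subst hb1
          exact absurd (Or.inr ⟨0, by rw [fl_zero], by rw [fl_zero]⟩) hP
        · exact h
      exact ⟨0, 1, by omega, Or.inr (Or.inr (Or.inl ⟨by omega, rfl⟩)), Or.inl ⟨rfl, rfl⟩⟩
    · -- a ≥ 2
      have key : (∃ n, a = fl n + 2) ∨ (∃ n, 1 ≤ n ∧ a = fl n + n + 2) := by
        rcases Nat.eq_zero_or_pos (a - 2) with h | h
        · left; exact ⟨0, by rw [fl_zero]; omega⟩
        · rcases beatty_ex (a-2) h with ⟨n, hn, he⟩ | ⟨n, hn, he⟩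
          · left; exact ⟨n, by omega⟩
          · right; rw [fl2_eq] at he; exact ⟨n, hn, by omega⟩
      rcases key with ⟨n, hA⟩ | ⟨n, hn1, hB⟩
      · rcases lt_trichotomy b (fl n + n + 2) with hb | hb | hb
        · have hn1 : 1 ≤ n := by
            rcases Nat.eq_zero_or_pos n with h | h
            · subst h; rw [fl_zero] at hA hb; omega
            · exact h
          set d := b - a with hd
          have hdn : d < n := by omega
          have hfd : fl d < fl n := fl_mono hdn
          have hdfd := le_fl d
          have hnfn := le_fl n
          refine ⟨fl d + 2, fl d + d + 2, by omega, ?_, Or.inr ⟨d, rfl, rfl⟩⟩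
          right; right; right
          refine ⟨fl n - fl d, by omega, by omega, ?_, by omega, by omega⟩
          have e1 : a - (fl n - fl d) = fl d + 2 := by omega
          have e2 : b - (fl n - fl d) = fl d + d + 2 := by omega
          rw [e1, e2, divOne (by omega) (by omega) (by omega),
            divOne (by omega) (by omega) (by omega)]
        · exact absurd (Or.inr ⟨n, hA, hb⟩) hQ
        · refine ⟨a, fl n + n + 2, by omega, Or.inl ⟨rfl, hb⟩, Or.inr ⟨n, hA, rfl⟩⟩
      · refine ⟨fl n + 2, a, by omega, ?_, Or.inr ⟨n, rfl, hB⟩⟩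
        right; right; left
        exact ⟨by omega, rfl⟩


def InP (p : ℕ × ℕ) : Prop := PP p.1 p.2 ∨ PP p.2 p.1
def InQ (p : ℕ × ℕ) : Prop := QQ p.1 p.2 ∨ QQ p.2 p.1

lemma PP_ord {a b : ℕ} (hab : a ≤ b) (h : PP a b ∨ PP b a) : PP a b := by
  rcases h with h | h
  · exact h
  · have := PP_le h
    have : a = b := le_antisymm hab this
    subst this; exact h

lemma QQ_ord {a b : ℕ} (hab : a ≤ b) (h : QQ a b ∨ QQ b a) : QQ a b := by
  rcases h with h | h
  · exact h
  · have := QQ_le h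
    have : a = b := le_antisymm hab this
    subst this; exact h

lemma moveP {p q : ℕ × ℕ} (h : FMove p q) (hp : InP p) : ¬ InP q := by
  obtain ⟨a, b, x, y, hab, hxy, hpq, hq, hc⟩ := h
  have hPab : PP a b := by
    rcases hpq with h' | h' <;> subst h'
    · exact PP_ord hab hp
    · exact PP_ord hab hp.symm
  have hnot : ¬ PP x y := H1 hxy hPab hc
  intro hq'
  apply hnot
  rcases hq with h' | h' <;> subst h'
  · exact PP_ord hxy hq'
  · exact PP_ord hxy hq'.symm

lemma moveQ {p q : ℕ × ℕ} (h : FMove p q) (hp : InQ p) : ¬ InQ q := by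
  obtain ⟨a, b, x, y, hab, hxy, hpq, hq, hc⟩ := h
  have hQab : QQ a b := by
    rcases hpq with h' | h' <;> subst h'
    · exact QQ_ord hab hp
    · exact QQ_ord hab hp.symm
  have hnot : ¬ QQ x y := H4 hxy hQab hc
  intro hq'
  apply hnot
  rcases hq with h' | h' <;> subst h'
  · exact QQ_ord hxy hq'
  · exact QQ_ord hxy hq'.symm

lemma existMoveP {p : ℕ × ℕ} (hp : ¬ InP p) : ∃ q, FMove p q ∧ InP q := by
  rcases le_total p.1 p.2 with h | h
  · have hP : ¬ PP p.1 p.2 := fun h' => hp (Or.inl h')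
    obtain ⟨x, y, hxy, hm, hPxy⟩ := H2 h hP
    exact ⟨(x, y), ⟨p.1, p.2, x, y, h, hxy, Or.inl rfl, Or.inl rfl, hm⟩, Or.inl hPxy⟩
  · have hP : ¬ PP p.2 p.1 := fun h' => hp (Or.inr h')
    obtain ⟨x, y, hxy, hm, hPxy⟩ := H2 h hP
    exact ⟨(x, y), ⟨p.2, p.1, x, y, h, hxy, Or.inr rfl, Or.inl rfl, hm⟩, Or.inl hPxy⟩

lemma existMoveQ {p : ℕ × ℕ} (hp : ¬ InP p) (hq : ¬ InQ p) : ∃ q, FMove p q ∧ InQ q := by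
  rcases le_total p.1 p.2 with h | h
  · have hP : ¬ PP p.1 p.2 := fun h' => hp (Or.inl h')
    have hQ : ¬ QQ p.1 p.2 := fun h' => hq (Or.inl h')
    obtain ⟨x, y, hxy, hm, hQxy⟩ := H5 h hP hQ
    exact ⟨(x, y), ⟨p.1, p.2, x, y, h, hxy, Or.inl rfl, Or.inl rfl, hm⟩, Or.inl hQxy⟩
  · have hP : ¬ PP p.2 p.1 := fun h' => hp (Or.inr h')
    have hQ : ¬ QQ p.2 p.1 := fun h' => hq (Or.inr h')
    obtain ⟨x, y, hxy, hm, hQxy⟩ := H5 h hP hQ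
    exact ⟨(x, y), ⟨p.2, p.1, x, y, h, hxy, Or.inr rfl, Or.inl rfl, hm⟩, Or.inl hQxy⟩

lemma InP_not_InQ {p : ℕ × ℕ} (h : InP p) : ¬ InQ p := by
  obtain ⟨a, b⟩ := p
  rintro (hQ | hQ) <;> rcases h with hP | hP <;> simp only at hP hQ
  · exact PP_not_QQ hP hQ
  · have h1 := PP_le hP; have h2 := QQ_le hQ
    have : a = b := by omega
    subst this; exact PP_not_QQ hP hQ
  · have h1 := PP_le hP; have h2 := QQ_le hQ
    have : a = b := by omega
    subst this; exact PP_not_QQ hP hQ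
  · exact PP_not_QQ hP hQ

lemma mainLemma : ∀ N (p : ℕ × ℕ), p.1 + p.2 ≤ N →
    ((grundy p = 0 ↔ InP p) ∧ (grundy p = 1 ↔ InQ p)) := by
  intro N
  induction N using Nat.strong_induction_on with
  | _ N IH =>
    intro p hp
    have IHq : ∀ q, FMove p q → ((grundy q = 0 ↔ InP q) ∧ (grundy q = 1 ↔ InQ q)) := by
      intro q hq
      have hlt := fMove_lt hq
      exact IH (q.1 + q.2) (by omega) q le_rfl
    constructor
    · rw [grundy0_iff]
      constructor
      · intro h
        by_contra hP
        obtain ⟨q, hq, hqP⟩ := existMoveP hP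
        exact h q hq ((IHq q hq).1.mpr hqP)
      · intro hP q hq h0
        exact moveP hq hP ((IHq q hq).1.mp h0)
    · rw [grundy1_iff]
      constructor
      · rintro ⟨⟨q, hq, h0⟩, h1⟩
        by_contra hQ
        by_cases hP : InP p
        · exact moveP hq hP ((IHq q hq).1.mp h0)
        · obtain ⟨r, hr, hrQ⟩ := existMoveQ hP hQ
          exact h1 r hr ((IHq r hr).2.mpr hrQ)
      · intro hQ
        refine ⟨?_, ?_⟩
        · obtain ⟨q, hq, hqP⟩ := existMoveP (fun hP => InP_not_InQ hP hQ)
          exact ⟨q, hq, (IHq q hq).1.mpr hqP⟩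
        · intro q hq h1
          exact moveQ hq hQ ((IHq q hq).2.mp h1)

theorem stmt14 (p : ℕ × ℕ) :
    grundy p = 1 ↔ p ∈ {p : ℕ × ℕ | p = (0, 1) ∨ p = (1, 0) ∨ ∃ n : ℕ, p = (fl n + 2, fl2 n + 2) ∨ p = (fl2 n + 2, fl n + 2)} := by
  rw [(mainLemma (p.1 + p.2) p le_rfl).2]
  obtain ⟨a, b⟩ := p
  simp only [Set.mem_setOf_eq, InQ, QQ, Prod.mk.injEq, fl2_eq]
  constructor
  · rintro ((⟨h1, h2⟩ | ⟨n, h1, h2⟩) | (⟨h1, h2⟩ | ⟨n, h1, h2⟩))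
    · exact Or.inl ⟨h1, h2⟩
    · exact Or.inr (Or.inr ⟨n, Or.inl ⟨h1, by omega⟩⟩)
    · exact Or.inr (Or.inl ⟨h2, h1⟩)
    · exact Or.inr (Or.inr ⟨n, Or.inr ⟨by omega, h1⟩⟩)
  · rintro (⟨h1, h2⟩ | ⟨h1, h2⟩ | ⟨n, ⟨h1, h2⟩ | ⟨h1, h2⟩⟩)
    · exact Or.inl (Or.inl ⟨h1, h2⟩)
    · exact Or.inr (Or.inl ⟨h2, h1⟩)
    · exact Or.inl (Or.inr ⟨n, h1, by omega⟩)
    · exact Or.inr (Or.inr ⟨n, h2, by omega⟩)
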